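/- arXiv:1202.2396 — 4 statements merged into one kernel-verified Lean document; each statement's English description precedes it below -/
import Mathlib

section
/- Let Q be a κ×κ rate matrix (nonnegative off-diagonal entries, zero row sums) that is irreducible, meaning its associated directed graph on states (with edge i→j iff Q_{ij} ≠ 0) is strongly connected. Then for every t > 0, the matrix exp(Qt) has strictly positive entries and is nonsingular. -/
attribute [local instance] Matrix.linftyOpNormedRing Matrix.linftyOpNormedAlgebra

open NormedSpace in
lemma stmt0_exp_entry {κ : ℕ} (x : Matrix (Fin κ) (Fin κ) ℝ) (i j : Fin κ) :
    NormedSpace.exp x i j = ∑' n : ℕ, (((n.factorial : ℝ)⁻¹) • x ^ n) i j := by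
  have h : Summable fun n : ℕ => ((n.factorial : ℝ)⁻¹) • x ^ n :=
    NormedSpace.expSeries_summable' (𝕂 := ℝ) x
  simp only [NormedSpace.exp_eq_tsum ℝ]
  erw [tsum_apply h, tsum_apply (Pi.summable.1 h i)]

open NormedSpace in
lemma stmt0_exp_smul_one {κ : ℕ} (r : ℝ) :
    NormedSpace.exp (r • (1 : Matrix (Fin κ) (Fin κ) ℝ)) = Real.exp r • 1 := by
  rw [← Algebra.algebraMap_eq_smul_one, Real.exp_eq_exp_ℝ, ← Algebra.algebraMap_eq_smul_one]
  exact (NormedSpace.algebraMap_exp_comm r).symm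

/-- An irreducible rate matrix `Q` (nonnegative off-diagonal entries, zero
row sums, strongly connected adjacency digraph) has `exp(Qt)` with strictly positive
entries and nonsingular, for every `t > 0`. -/
theorem stmt0 {κ : ℕ} (Q : Matrix (Fin κ) (Fin κ) ℝ)
    (hoff : ∀ i j, i ≠ j → 0 ≤ Q i j)
    (hrow : ∀ i, ∑ j, Q i j = 0)
    (hirr : ∀ i j : Fin κ, Relation.ReflTransGen (fun a b => Q a b ≠ 0) i j)
    (t : ℝ) (ht : 0 < t) :
    (∀ i j, 0 < NormedSpace.exp (t • Q) i j) ∧ IsUnit (NormedSpace.exp (t • Q)).det := by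
  classical
  set c : ℝ := 1 + ∑ k, |Q k k| with hc
  have hcbig : ∀ i, |Q i i| < c := by
    intro i
    have : |Q i i| ≤ ∑ k, |Q k k| :=
      Finset.single_le_sum (f := fun k => |Q k k|) (fun k _ => abs_nonneg _) (Finset.mem_univ i)
    simp only [hc]; linarith
  set A : Matrix (Fin κ) (Fin κ) ℝ := Q + c • (1 : Matrix (Fin κ) (Fin κ) ℝ) with hA
  have hAd : ∀ i, 0 < A i i := by
    intro i
    have h1 := hcbig i
    have h2 : -Q i i ≤ |Q i i| := neg_le_abs _
    have : A i i = Q i i + c := by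
      simp [hA, Matrix.add_apply, Matrix.smul_apply, Matrix.one_apply]
    rw [this]; linarith
  have hAo : ∀ i j, i ≠ j → A i j = Q i j := by
    intro i j hij
    simp [hA, Matrix.add_apply, Matrix.smul_apply, Matrix.one_apply, hij]
  have hAnn : ∀ i j, 0 ≤ A i j := by
    intro i j
    by_cases hij : i = j
    · subst hij; exact (hAd i).le
    · rw [hAo i j hij]; exact hoff i j hij
  have hedge : ∀ i j, Q i j ≠ 0 → 0 < A i j := by
    intro i j hq
    by_cases hij : i = j
    · subst hij; exact hAd i
    · rw [hAo i j hij]; exact lt_of_le_of_ne (hoff i j hij) (Ne.symm hq)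
  have hpow : ∀ n : ℕ, ∀ i j, 0 ≤ (A ^ n) i j := by
    intro n
    induction n with
    | zero =>
        intro i j
        simp only [pow_zero, Matrix.one_apply]
        split <;> norm_num
    | succ n ih =>
        intro i j
        rw [pow_succ, Matrix.mul_apply]
        exact Finset.sum_nonneg fun k _ => mul_nonneg (ih i k) (hAnn k j)
  have reach : ∀ i j : Fin κ, Relation.ReflTransGen (fun a b => Q a b ≠ 0) i j →
      ∃ n : ℕ, 0 < (A ^ n) i j := by
    intro i j h
    induction h with
    | refl => exact ⟨0, by simp⟩
    | @tail b d hib hbd ih =>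
        obtain ⟨n, hn⟩ := ih
        refine ⟨n + 1, ?_⟩
        rw [pow_succ, Matrix.mul_apply]
        have hpos : 0 < (A ^ n) i b * A b d := mul_pos hn (hedge b d hbd)
        have hle : (A ^ n) i b * A b d ≤ ∑ k, (A ^ n) i k * A k d :=
          Finset.single_le_sum (f := fun k => (A ^ n) i k * A k d)
            (fun k _ => mul_nonneg (hpow n i k) (hAnn k d)) (Finset.mem_univ b)
        linarith
  -- decomposition exp (t • Q) = Real.exp (-(t*c)) • exp (t • A)
  have hsplit : t • Q = t • A + (-(t * c)) • (1 : Matrix (Fin κ) (Fin κ) ℝ) := by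
    rw [hA]
    module
  have hcomm : Commute (t • A) ((-(t * c)) • (1 : Matrix (Fin κ) (Fin κ) ℝ)) :=
    (Commute.one_right _).smul_right _
  have hQexp : NormedSpace.exp (t • Q)
      = Real.exp (-(t * c)) • NormedSpace.exp (t • A) := by
    rw [hsplit, Matrix.exp_add_of_commute _ _ hcomm, stmt0_exp_smul_one,
      mul_smul_comm, mul_one]
  -- positivity of entries of exp (t • A)
  have hApos : ∀ i j, 0 < NormedSpace.exp (t • A) i j := by
    intro i j
    rw [stmt0_exp_entry]
    have hsum : Summable fun n : ℕ => (((n.factorial : ℝ)⁻¹) • (t • A) ^ n) i j := by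
      have h : Summable fun n : ℕ => ((n.factorial : ℝ)⁻¹) • (t • A) ^ n :=
        NormedSpace.expSeries_summable' (𝕂 := ℝ) (t • A)
      exact Pi.summable.1 (Pi.summable.1 h i) j
    have hterm : ∀ n : ℕ, 0 ≤ (((n.factorial : ℝ)⁻¹) • (t • A) ^ n) i j := by
      intro n
      have : ((t • A) ^ n) i j = t ^ n * (A ^ n) i j := by
        rw [smul_pow, Matrix.smul_apply, smul_eq_mul]
      simp only [Matrix.smul_apply, smul_eq_mul, this]
      exact mul_nonneg (by positivity) (mul_nonneg (by positivity) (hpow n i j))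
    obtain ⟨n, hn⟩ := reach i j (hirr i j)
    refine Summable.tsum_pos hsum hterm n ?_
    have : ((t • A) ^ n) i j = t ^ n * (A ^ n) i j := by
      rw [smul_pow, Matrix.smul_apply, smul_eq_mul]
    simp only [Matrix.smul_apply, smul_eq_mul, this]
    exact mul_pos (by positivity) (mul_pos (by positivity) hn)
  constructor
  · intro i j
    rw [hQexp, Matrix.smul_apply, smul_eq_mul]
    exact mul_pos (Real.exp_pos _) (hApos i j)
  · exact (Matrix.isUnit_iff_isUnit_det _).1 (Matrix.isUnit_exp (t • Q))
end

section
/- Fix a, b, c ∈ (0,1). The map F: R⁵ → R⁴ given by F(d,e,f,g,π) = ((1−π)d + πf, (1−π)de + πg, (1−π)e + πfg, (1−π)de + πfg) has surjective derivative (Jacobian of rank 4) at the point (d,e,f,g,π) = (0, bc, b, c, a). -/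
set_option maxHeartbeats 1600000 in
/-- For a, b, c ∈ (0,1), the map
`F(d,e,f,g,π) = ((1−π)d + πf, (1−π)de + πg, (1−π)e + πfg, (1−π)de + πfg)` has surjective
derivative (Jacobian of rank 4) at the point (0, bc, b, c, a). -/
theorem stmt13 (a b c : ℝ) (ha : a ∈ Set.Ioo (0:ℝ) 1) (hb : b ∈ Set.Ioo (0:ℝ) 1)
    (hc : c ∈ Set.Ioo (0:ℝ) 1) :
    Function.Surjective
      (fderiv ℝ
        (fun v : Fin 5 → ℝ =>
          ![(1 - v 4) * v 0 + v 4 * v 2,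
            (1 - v 4) * (v 0 * v 1) + v 4 * v 3,
            (1 - v 4) * v 1 + v 4 * (v 2 * v 3),
            (1 - v 4) * (v 0 * v 1) + v 4 * (v 2 * v 3)])
        ![0, b * c, b, c, a]) := by
  obtain ⟨ha0, ha1⟩ := ha
  obtain ⟨hb0, hb1⟩ := hb
  obtain ⟨hc0, hc1⟩ := hc
  have hs : (1 - a) ≠ 0 := by linarith
  have haa : a ≠ 0 := ne_of_gt ha0
  have hcc : c ≠ 0 := ne_of_gt hc0
  set p : Fin 5 → ℝ := ![0, b * c, b, c, a] with hp
  set P : Fin 5 → ((Fin 5 → ℝ) →L[ℝ] ℝ) := fun i => ContinuousLinearMap.proj i with hPdef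
  set L : (Fin 5 → ℝ) →L[ℝ] (Fin 4 → ℝ) := ContinuousLinearMap.pi
    ![(1 - a) • P 0 + a • P 2 + b • P 4,
      ((1 - a) * (b * c)) • P 0 + a • P 3 + c • P 4,
      (1 - a) • P 1 + (a * c) • P 2 + (a * b) • P 3,
      ((1 - a) * (b * c)) • P 0 + (a * c) • P 2 + (a * b) • P 3 + (b * c) • P 4] with hLdef
  have h0 : HasFDerivAt (fun v : Fin 5 → ℝ => v 0) (P 0) p := hasFDerivAt_apply 0 p
  have h1 : HasFDerivAt (fun v : Fin 5 → ℝ => v 1) (P 1) p := hasFDerivAt_apply 1 p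
  have h2 : HasFDerivAt (fun v : Fin 5 → ℝ => v 2) (P 2) p := hasFDerivAt_apply 2 p
  have h3 : HasFDerivAt (fun v : Fin 5 → ℝ => v 3) (P 3) p := hasFDerivAt_apply 3 p
  have h4 : HasFDerivAt (fun v : Fin 5 → ℝ => v 4) (P 4) p := hasFDerivAt_apply 4 p
  have hone : HasFDerivAt (fun _ : Fin 5 → ℝ => (1 : ℝ)) (0 : (Fin 5 → ℝ) →L[ℝ] ℝ) p := hasFDerivAt_const 1 p
  have hpe : ∀ i, p i = ![0, b * c, b, c, a] i := fun i => by rw [hp]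
  have hF : HasFDerivAt
      (fun v : Fin 5 → ℝ =>
        ![(1 - v 4) * v 0 + v 4 * v 2,
          (1 - v 4) * (v 0 * v 1) + v 4 * v 3,
          (1 - v 4) * v 1 + v 4 * (v 2 * v 3),
          (1 - v 4) * (v 0 * v 1) + v 4 * (v 2 * v 3)]) L p := by
    rw [hLdef]
    apply hasFDerivAt_pi.2
    intro i
    fin_cases i
    · have h := ((hone.sub h4).mul h0).add (h4.mul h2)
      convert h using 1
      ext v
      have := hpe 4; have := hpe 0; have := hpe 2
      simp [hp] at *
      ring
      ext v
      simp [hp, hPdef]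
      ring
    · have h := ((hone.sub h4).mul (h0.mul h1)).add (h4.mul h3)
      convert h using 1
      ext v
      simp [hp]
      ring
      ext v
      simp [hp, hPdef]
      ring
    · have h := ((hone.sub h4).mul h1).add (h4.mul (h2.mul h3))
      convert h using 1
      ext v
      simp [hp]
      ring
      ext v
      simp [hp, hPdef]
      ring
    · have h := ((hone.sub h4).mul (h0.mul h1)).add (h4.mul (h2.mul h3))
      convert h using 1
      ext v
      simp [hp]
      ring
      ext v
      simp [hp, hPdef]
      ring
  rw [hF.fderiv]
  intro y
  have hk : (1 - b + b * b) ≠ 0 := by nlinarith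
  set u0 : ℝ := (c * y 0 + b * y 1 - y 3) / ((1 - a) * c * (1 - b + b * b)) with hu0
  set u2 : ℝ := (y 0 - (1 - a) * u0) / a with hu2
  set u3 : ℝ := (y 1 - (1 - a) * (b * c) * u0) / a with hu3
  set u1 : ℝ := (y 2 - a * c * u2 - a * b * u3) / (1 - a) with hu1
  have hD : (1 - a) * c * (1 - b + b * b) * u0 = c * y 0 + b * y 1 - y 3 := by
    rw [hu0]; field_simp
  have hA : a * u2 = y 0 - (1 - a) * u0 := by rw [hu2]; field_simp
  have hB : a * u3 = y 1 - (1 - a) * (b * c) * u0 := by rw [hu3]; field_simp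
  have hC : (1 - a) * u1 = y 2 - a * c * u2 - a * b * u3 := by rw [hu1]; field_simp
  clear_value u0 u2 u3 u1
  refine ⟨![u0, u1, u2, u3, 0], ?_⟩
  funext i
  fin_cases i
  all_goals simp [hLdef, hPdef, ContinuousLinearMap.pi_apply]
  · linear_combination hA
  · linear_combination hB
  · linear_combination hC
  · linear_combination c * hA + b * hB - hD
end

section
/- Fix a, b, c ∈ (0,1). There exist d, e, f, g, π ∈ (0,1) satisfying ab = (1−π)d + πf, ac = (1−π)de + πg, bc = (1−π)e + πfg, and abc = (1−π)de + πfg. -/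
set_option maxHeartbeats 1000000


/-- For any a, b, c ∈ (0,1) there exist d, e, f, g, π ∈ (0,1) solving the
3-leaf Jukes-Cantor mimicking system (complete mimicking by the open 2-class mixture). -/
theorem stmt14 (a b c : ℝ) (ha : a ∈ Set.Ioo (0:ℝ) 1) (hb : b ∈ Set.Ioo (0:ℝ) 1)
    (hc : c ∈ Set.Ioo (0:ℝ) 1) :
    ∃ d e f g π : ℝ, d ∈ Set.Ioo (0:ℝ) 1 ∧ e ∈ Set.Ioo (0:ℝ) 1 ∧ f ∈ Set.Ioo (0:ℝ) 1 ∧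
      g ∈ Set.Ioo (0:ℝ) 1 ∧ π ∈ Set.Ioo (0:ℝ) 1 ∧
      a * b = (1 - π) * d + π * f ∧
      a * c = (1 - π) * (d * e) + π * g ∧
      b * c = (1 - π) * e + π * (f * g) ∧
      a * b * c = (1 - π) * (d * e) + π * (f * g) := by
  obtain ⟨ha0, ha1⟩ := ha
  obtain ⟨hb0, hb1⟩ := hb
  obtain ⟨hc0, hc1⟩ := hc
  set S : ℝ := a + b - 2*a*b with hS
  have hS0 : 0 < S := by nlinarith
  set ε : ℝ := min (b/(2*S)) (min (b*(1-c)/2) ((1-c*b)/2)) with hε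
  clear_value S
  have hε0 : 0 < ε := by
    refine lt_min (by positivity) (lt_min (by nlinarith) (by nlinarith))
  have hε2 : ε ≤ b*(1-c)/2 := le_trans (min_le_right _ _) (min_le_left _ _)
  have hε3 : ε ≤ (1-c*b)/2 := le_trans (min_le_right _ _) (min_le_right _ _)
  have hεS : S * ε < b := by
    have h := min_le_left (b/(2*S)) (min (b*(1-c)/2) ((1-c*b)/2))
    rw [← hε] at h
    calc S * ε ≤ S * (b/(2*S)) := by nlinarith
    _ = b/2 := by field_simp
    _ < b := by linarith
  have hεb : ε < b := by nlinarith
  have hε1 : ε < 1 := by nlinarith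
  -- key denominators are positive
  have hP : 0 < 1 + a*ε := by nlinarith
  have hQ : 0 < 1 - b*(1-a)*ε := by nlinarith
  have hA : 0 < 1 - (1-a*b)*ε := by nlinarith
  have hB : 0 < b - (1-a*b)*ε := by nlinarith
  have hBS : 0 < b - S*ε := by nlinarith
  have h1a : 0 < 1 - (1-a)*ε := by nlinarith
  have h1a' : (0:ℝ) < 1 - a := by linarith
  clear_value ε
  have hPne : (1 + a*ε) ≠ 0 := ne_of_gt hP
  have hQne : (1 - b*(1-a)*ε) ≠ 0 := ne_of_gt hQ
  have hAne : (1 - (1-a*b)*ε) ≠ 0 := ne_of_gt hA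
  have hBne : (b - (1-a*b)*ε) ≠ 0 := ne_of_gt hB
  have hBSne : (b - (a+b-2*a*b)*ε) ≠ 0 := by rw [← hS]; exact ne_of_gt hBS
  refine ⟨a*ε/(1+a*ε), c*(b-S*ε)/(1-(1-a*b)*ε), b*(1-(1-a)*ε)/(1-b*(1-a)*ε),
      c*(b-S*ε)/(b-(1-a*b)*ε),
      1 - b*(1-a)*(1-(1-a*b)*ε)*(1+a*ε)/(b-S*ε), ?_, ?_, ?_, ?_, ?_, ?_, ?_, ?_, ?_⟩
  · constructor
    · positivity
    · rw [div_lt_one hP]; nlinarith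
  · constructor
    · positivity
    · rw [div_lt_one hA]; nlinarith
  · constructor
    · positivity
    · rw [div_lt_one hQ]; nlinarith
  · constructor
    · positivity
    · rw [div_lt_one hB]
      nlinarith [mul_pos hc0 (mul_pos hS0 hε0), mul_pos (mul_pos ha0 hb0) hε0]
  · have hu0 : 0 < b*(1-a)*(1-(1-a*b)*ε)*(1+a*ε)/(b-S*ε) :=
      div_pos (mul_pos (mul_pos (mul_pos hb0 h1a') hA) hP) hBS
    have hu1 : b*(1-a)*(1-(1-a*b)*ε)*(1+a*ε)/(b-S*ε) < 1 := by
      rw [div_lt_one hBS]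
      have key : (b - S*ε) - b*(1-a)*(1-(1-a*b)*ε)*(1+a*ε)
          = a*(1-b*(1-a)*ε)*(b-(1-a*b)*ε) := by rw [hS]; ring
      nlinarith [mul_pos (mul_pos ha0 hQ) hB]
    constructor <;> [linarith; linarith]
  · field_simp [hPne, hQne, hAne, hBne, hBS.ne', (show b - ε*S ≠ 0 by rw [mul_comm]; exact hBS.ne')]
    subst hS
    ring
  · field_simp [hPne, hQne, hAne, hBne, hBS.ne', (show b - ε*S ≠ 0 by rw [mul_comm]; exact hBS.ne')]
    subst hS
    ring
  · field_simp [hPne, hQne, hAne, hBne, hBS.ne', (show b - ε*S ≠ 0 by rw [mul_comm]; exact hBS.ne'),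
      (show 1 - (1 - b*a)*ε ≠ 0 by rw [mul_comm b a]; exact hAne),
      (show b - (1 - b*a)*ε ≠ 0 by rw [mul_comm b a]; exact hBne)]
    subst hS
    ring
  · field_simp [hPne, hQne, hAne, hBne, hBS.ne', (show b - ε*S ≠ 0 by rw [mul_comm]; exact hBS.ne')]
    subst hS
    ring
end

section
/- Let P = (p_{ijkl}) be the κ×κ×κ×κ tensor with entries p_{ijkl} = Σ_{m,n} u_i(m) v_j(m) N(m,n) w_k(n) x_l(n) for nonsingular κ×κ matrices U = (u_i(m)), V, W, X and a κ×κ matrix N with all entries nonzero. Then the 13|24-flattening of P, the κ²×κ² matrix with rows indexed by (i,k) and columns by (j,l), equals (U ⊗ W) diag(N) (V ⊗ X)ᵀ and has rank κ². -/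
open Matrix Kronecker

/-- For nonsingular κ×κ matrices U, V, W, X and a κ×κ matrix N with all
entries nonzero, the tensor `p_{ijkl} = Σ_{m,n} U_{im} V_{jm} N_{mn} W_{kn} X_{ln}` has
13|24-flattening (rows `(i,k)`, columns `(j,l)`) equal to `(U ⊗ W) diag(N) (V ⊗ X)ᵀ`,
which has rank κ². -/
theorem stmt19 {κ : ℕ} (U V W X N : Matrix (Fin κ) (Fin κ) ℝ)
    (hU : IsUnit U.det) (hV : IsUnit V.det) (hW : IsUnit W.det) (hX : IsUnit X.det)
    (hN : ∀ m n, N m n ≠ 0)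
    (P : Fin κ → Fin κ → Fin κ → Fin κ → ℝ)
    (hP : ∀ i j k l, P i j k l = ∑ m, ∑ n, U i m * V j m * N m n * W k n * X l n) :
    (Matrix.of (fun p q : Fin κ × Fin κ => P p.1 q.1 p.2 q.2)) =
      (U ⊗ₖ W) * Matrix.diagonal (fun p : Fin κ × Fin κ => N p.1 p.2) * (V ⊗ₖ X)ᵀ ∧
    (Matrix.of (fun p q : Fin κ × Fin κ => P p.1 q.1 p.2 q.2)).rank = κ ^ 2 := by
  have heq : (Matrix.of (fun p q : Fin κ × Fin κ => P p.1 q.1 p.2 q.2)) =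
      (U ⊗ₖ W) * Matrix.diagonal (fun p : Fin κ × Fin κ => N p.1 p.2) * (V ⊗ₖ X)ᵀ := by
    ext ⟨i, k⟩ ⟨j, l⟩
    simp only [Matrix.of_apply, hP, Matrix.mul_apply, Matrix.transpose_apply,
      Matrix.kroneckerMap_apply, Fintype.sum_prod_type, Matrix.diagonal_apply,
      Prod.mk.injEq, ite_and, mul_ite, mul_zero, ite_mul, zero_mul,
      Finset.sum_ite_eq, Finset.sum_ite_eq', Finset.mem_univ, if_true]
    exact Finset.sum_congr rfl fun m _ => Finset.sum_congr rfl fun n _ => by ring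
  refine ⟨heq, ?_⟩
  rw [heq]
  have hunit : IsUnit ((U ⊗ₖ W) * Matrix.diagonal (fun p : Fin κ × Fin κ => N p.1 p.2)
      * (V ⊗ₖ X)ᵀ).det := by
    rw [Matrix.det_mul, Matrix.det_mul, Matrix.det_transpose, Matrix.det_kronecker,
      Matrix.det_kronecker, Matrix.det_diagonal]
    exact (((hU.pow _).mul (hW.pow _)).mul
      (isUnit_iff_ne_zero.2 (Finset.prod_ne_zero_iff.2 fun p _ => hN p.1 p.2))).mul
      ((hV.pow _).mul (hX.pow _))
  rw [Matrix.rank_of_isUnit _ ((Matrix.isUnit_iff_isUnit_det _).2 hunit)]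
  simp [sq]
end
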